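/- Let C1, C2, ε > 0 and b* = 2C2/ε². Then the minimal SFO complexity equals N(b*) = 4·C1·C2/ε⁴, and for any b > C2/ε², N(b) ≥ 4·C1·C2/ε⁴. -/
import Mathlib

/-- The minimal SFO complexity: `N(2C2/ε²) = 4·C1·C2/ε⁴`, and `N(b) ≥ 4·C1·C2/ε⁴`
for all `b > C2/ε²`. -/
theorem minimal_sfo_complexity (C1 C2 ε : ℝ) (hC1 : 0 < C1) (hC2 : 0 < C2) (hε : 0 < ε)
    (N : ℝ → ℝ) (hN : ∀ b, N b = C1 * b ^ 2 / (ε ^ 2 * b - C2)) :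
    N (2 * C2 / ε ^ 2) = 4 * C1 * C2 / ε ^ 4 ∧
      ∀ b, C2 / ε ^ 2 < b → 4 * C1 * C2 / ε ^ 4 ≤ N b := by
  have hε2 : (0:ℝ) < ε ^ 2 := by positivity
  constructor
  · rw [hN]
    have h1 : ε ^ 2 * (2 * C2 / ε ^ 2) - C2 = C2 := by field_simp; ring
    rw [h1]
    field_simp
    ring
  · intro b hb
    rw [hN]
    have hd : 0 < ε ^ 2 * b - C2 := by
      have := (div_lt_iff₀ hε2).mp hb; linarith [this]
    rw [div_le_div_iff₀ (by positivity) hd]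
    nlinarith [sq_nonneg (ε ^ 2 * b - 2 * C2), sq_nonneg ε, mul_pos hC1 hC2]
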